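/- For a Hermitian matrix h with eigenvalues ε_j, β > 0 and t ≥ 0, the trace norm bound (1/2)‖(i/2)tanh(2βh)·e^{−4q(4h)²cosh(2βh)t}‖_Tr = ∑_j (1/4)|tanh(2βε_j)|·e^{−4q(4ε_j)²cosh(2βε_j)t} ≤ (n/2)·tanh(2β‖h‖)·e^{−4(min_j q(4ε_j)²cosh(2βε_j))t} holds, where n is the dimension and ‖h‖ the operator norm. -/

import Mathlib

private lemma tanh_mono' {a b : ℝ} (h : a ≤ b) : Real.tanh a ≤ Real.tanh b := by
  rw [Real.tanh_eq_sinh_div_cosh, Real.tanh_eq_sinh_div_cosh,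
    div_le_div_iff₀ (Real.cosh_pos a) (Real.cosh_pos b)]
  have h1 : 0 ≤ Real.sinh (b - a) := Real.sinh_nonneg_iff.mpr (sub_nonneg.mpr h)
  nlinarith [Real.sinh_sub b a]

/-- trace-norm bound for `X = (i/2)tanh(2βh)e^{−4q(4h)²cosh(2βh)t}`,
expressed through the eigenvalues `ε j` (with multiplicity) of the Hermitian matrix `h`:
`(1/2)‖X‖_Tr = ∑_j (1/4)|tanh(2βε_j)| e^{−4q(4ε_j)²cosh(2βε_j)t}
  ≤ (n/2) tanh(2β‖h‖) e^{−4 (min_j q(4ε_j)²cosh(2βε_j)) t}`.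
The trace norm of the normal matrix `X` is the sum of the absolute values of its
eigenvalues, which is supplied as the hypothesis `hτ`. -/
theorem trace_norm_mixing_bound {n : ℕ} (hn : 0 < n) (β t : ℝ) (hβ : 0 < β) (ht : 0 ≤ t)
    (q : ℝ → ℝ) (hq_cont : Continuous q)
    (ε : Fin n → ℝ)
    -- `hnorm = ‖h‖` is the largest absolute value of an eigenvalue
    (hnorm : ℝ) (hnorm_ge : ∀ j, |ε j| ≤ hnorm) (hnorm_mem : ∃ j, |ε j| = hnorm)
    -- `m = min_j q(4ε_j)² cosh(2βε_j)`
    (m : ℝ) (hm_le : ∀ j, m ≤ q (4 * ε j) ^ 2 * Real.cosh (2 * β * ε j))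
    (hm_mem : ∃ j, m = q (4 * ε j) ^ 2 * Real.cosh (2 * β * ε j))
    -- `τX = ‖X‖_Tr`: the trace norm of `X`, i.e. the sum of the absolute values of the
    -- eigenvalues `(i/2)tanh(2βε_j)e^{−4q(4ε_j)²cosh(2βε_j)t}` of the normal matrix `X`
    (τX : ℝ)
    (hτ : τX = ∑ j, ‖(Complex.I / 2) * (Real.tanh (2 * β * ε j) : ℂ) *
        (Real.exp (-4 * q (4 * ε j) ^ 2 * Real.cosh (2 * β * ε j) * t) : ℂ)‖) :
    (1 / 2) * τX
        = ∑ j, (1 / 4) * |Real.tanh (2 * β * ε j)| *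
            Real.exp (-4 * q (4 * ε j) ^ 2 * Real.cosh (2 * β * ε j) * t)
    ∧ (1 / 2) * τX
        ≤ (n / 2) * Real.tanh (2 * β * hnorm) * Real.exp (-4 * m * t) := by

  have habs : ∀ j : Fin n, ‖(Complex.I / 2) * (Real.tanh (2 * β * ε j) : ℂ) *
      (Real.exp (-4 * q (4 * ε j) ^ 2 * Real.cosh (2 * β * ε j) * t) : ℂ)‖
      = (1 / 2) * |Real.tanh (2 * β * ε j)| *
        Real.exp (-4 * q (4 * ε j) ^ 2 * Real.cosh (2 * β * ε j) * t) := by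
    intro j
    rw [norm_mul, norm_mul, norm_div, Complex.norm_I, Complex.norm_real, Complex.norm_real]
    simp [abs_of_pos (Real.exp_pos _)]
  have heq : (1 / 2) * τX
      = ∑ j, (1 / 4) * |Real.tanh (2 * β * ε j)| *
          Real.exp (-4 * q (4 * ε j) ^ 2 * Real.cosh (2 * β * ε j) * t) := by
    rw [hτ, Finset.mul_sum]
    refine Finset.sum_congr rfl fun j _ => ?_
    rw [habs j]; ring
  refine ⟨heq, ?_⟩
  rw [heq]
  have hterm : ∀ j : Fin n, (1 / 4) * |Real.tanh (2 * β * ε j)| *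
      Real.exp (-4 * q (4 * ε j) ^ 2 * Real.cosh (2 * β * ε j) * t)
      ≤ (1 / 2) * Real.tanh (2 * β * hnorm) * Real.exp (-4 * m * t) := by
    intro j
    have htanh : |Real.tanh (2 * β * ε j)| ≤ Real.tanh (2 * β * hnorm) := by
      rw [abs_le]
      refine ⟨?_, ?_⟩
      · rw [← Real.tanh_neg]
        exact tanh_mono' (by nlinarith [neg_abs_le (ε j), hnorm_ge j])
      · exact tanh_mono' (by nlinarith [le_abs_self (ε j), hnorm_ge j])
    have hexp : Real.exp (-4 * q (4 * ε j) ^ 2 * Real.cosh (2 * β * ε j) * t)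
        ≤ Real.exp (-4 * m * t) := by
      apply Real.exp_le_exp.mpr
      nlinarith [hm_le j]
    have htanh_nonneg : 0 ≤ Real.tanh (2 * β * hnorm) := by
      rw [← Real.tanh_zero]
      obtain ⟨j0, hj0⟩ := hnorm_mem
      exact tanh_mono' (by nlinarith [abs_nonneg (ε j0)])
    calc (1 / 4) * |Real.tanh (2 * β * ε j)| *
        Real.exp (-4 * q (4 * ε j) ^ 2 * Real.cosh (2 * β * ε j) * t)
        ≤ (1 / 4) * Real.tanh (2 * β * hnorm) * Real.exp (-4 * m * t) := by
          apply mul_le_mul (by nlinarith [abs_nonneg (Real.tanh (2 * β * ε j))]) hexp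
            (Real.exp_pos _).le (by positivity)
      _ ≤ (1 / 2) * Real.tanh (2 * β * hnorm) * Real.exp (-4 * m * t) := by
          nlinarith [Real.exp_pos (-4 * m * t)]
  calc (∑ j, (1 / 4) * |Real.tanh (2 * β * ε j)| *
        Real.exp (-4 * q (4 * ε j) ^ 2 * Real.cosh (2 * β * ε j) * t))
      ≤ ∑ _j : Fin n, (1 / 2) * Real.tanh (2 * β * hnorm) * Real.exp (-4 * m * t) :=
        Finset.sum_le_sum fun j _ => hterm j
    _ = (n / 2) * Real.tanh (2 * β * hnorm) * Real.exp (-4 * m * t) := by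
        rw [Finset.sum_const, Finset.card_fin]; push_cast; ring
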